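/- Let N ≥ 1, integers k, ℓ ≥ 0, and c, C₀ > 0. Suppose F: ℝ^N × [0,∞) → [0,∞) satisfies F(ξ,t) ≤ C₀ e^{−c ρ_c(ξ) t} F(ξ,0) with ρ_c(ξ) = |ξ|²/(1+|ξ|²+|ξ|⁴). Then there exists C > 0 such that ∫_{ℝ^N} |ξ|^{2k} F(ξ,t) dξ ≤ C(1+t)^{−N/2−k}(sup_{|ξ|≤1} F(ξ,0)) + C(1+t)^{−ℓ} ∫_{|ξ|≥1} |ξ|^{2(k+ℓ)} F(ξ,0) dξ for all t ≥ 0 (assuming finiteness of the right-hand side). -/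

import Mathlib

open MeasureTheory Nat

private lemma aux_pow_le_exp {y : ℝ} (hy : 0 ≤ y) (n : ℕ) :
    y ^ n ≤ n ! * Real.exp y := by
  have h : y ^ n / n ! ≤ Real.exp y := by
    calc y ^ n / (n ! : ℝ)
        ≤ ∑ i ∈ Finset.range (n + 1), y ^ i / (i ! : ℝ) :=
          Finset.single_le_sum (f := fun i => y ^ i / (i ! : ℝ))
            (fun i _ => by positivity) (Finset.self_mem_range_succ n)
      _ ≤ Real.exp y := Real.sum_le_exp_of_nonneg hy _
  rw [div_le_iff₀ (by positivity)] at h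
  linarith

private lemma aux_pow_mul_exp_le (n : ℕ) {a s : ℝ} (ha : 0 < a) (hs : 0 ≤ s) :
    s ^ n * Real.exp (-(a * s)) ≤ n ! / a ^ n := by
  have h := aux_pow_le_exp (mul_nonneg ha.le hs) n
  rw [mul_pow] at h
  rw [le_div_iff₀ (pow_pos ha n)]
  calc s ^ n * Real.exp (-(a * s)) * a ^ n
      = (a ^ n * s ^ n) * Real.exp (-(a * s)) := by ring
    _ ≤ ((n ! : ℝ) * Real.exp (a * s)) * Real.exp (-(a * s)) :=
        mul_le_mul_of_nonneg_right h (Real.exp_nonneg _)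
    _ = n ! := by rw [mul_assoc, ← Real.exp_add]; simp

private lemma aux_gauss_integrable (N n : ℕ) {a : ℝ} (ha : 0 < a) :
    Integrable (fun u : EuclideanSpace ℝ (Fin N) => ‖u‖ ^ n * Real.exp (-(a * ‖u‖ ^ 2))) := by
  have ha2 : 0 < a / 2 := half_pos ha
  have hexp : Integrable (fun u : EuclideanSpace ℝ (Fin N) => Real.exp (-(a / 2 * ‖u‖ ^ 2))) := by
    have h := (GaussianFourier.integrable_cexp_neg_mul_sq_norm_add_of_euclideanSpace
      (b := ((a / 2 : ℝ) : ℂ)) (by simpa using ha2) 0 (0 : EuclideanSpace ℝ (Fin N))).norm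
    refine h.congr (Filter.Eventually.of_forall fun u => ?_)
    simp [Complex.norm_exp, ← Complex.ofReal_pow]
  have hbound : ∀ u : EuclideanSpace ℝ (Fin N),
      ‖‖u‖ ^ n * Real.exp (-(a * ‖u‖ ^ 2))‖
        ≤ (1 + n ! / (a / 2) ^ n) * Real.exp (-(a / 2 * ‖u‖ ^ 2)) := by
    intro u
    have hu : (0:ℝ) ≤ ‖u‖ := norm_nonneg u
    have h1 : ‖u‖ ^ n ≤ 1 + (‖u‖ ^ 2) ^ n := by
      rcases le_total ‖u‖ 1 with h | h
      · have h2 : ‖u‖ ^ n ≤ 1 := pow_le_one₀ hu h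
        have h3 : (0:ℝ) ≤ (‖u‖ ^ 2) ^ n := by positivity
        linarith
      · have h2 : ‖u‖ ^ n ≤ (‖u‖ ^ 2) ^ n :=
          pow_le_pow_left₀ hu (by nlinarith) n
        linarith
    have h4 := aux_pow_mul_exp_le n (a := a / 2) (s := ‖u‖ ^ 2) ha2 (by positivity)
    have h5 : Real.exp (-(a * ‖u‖ ^ 2)) ≤ Real.exp (-(a / 2 * ‖u‖ ^ 2)) := by
      apply Real.exp_le_exp.2; nlinarith
    have h6 : Real.exp (-(a * ‖u‖ ^ 2))
        = Real.exp (-(a / 2 * ‖u‖ ^ 2)) * Real.exp (-(a / 2 * ‖u‖ ^ 2)) := by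
      rw [← Real.exp_add]; ring_nf
    rw [norm_mul, norm_pow, norm_norm, Real.norm_eq_abs,
      abs_of_pos (Real.exp_pos _)]
    calc ‖u‖ ^ n * Real.exp (-(a * ‖u‖ ^ 2))
        ≤ (1 + (‖u‖ ^ 2) ^ n) * Real.exp (-(a * ‖u‖ ^ 2)) :=
          mul_le_mul_of_nonneg_right h1 (Real.exp_nonneg _)
      _ = Real.exp (-(a * ‖u‖ ^ 2))
          + (‖u‖ ^ 2) ^ n * (Real.exp (-(a / 2 * ‖u‖ ^ 2)) * Real.exp (-(a / 2 * ‖u‖ ^ 2))) := by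
          rw [← h6]; ring
      _ ≤ Real.exp (-(a / 2 * ‖u‖ ^ 2))
          + (n ! / (a / 2) ^ n) * Real.exp (-(a / 2 * ‖u‖ ^ 2)) := by
          have := mul_le_mul_of_nonneg_right h4 (Real.exp_nonneg (-(a / 2 * ‖u‖ ^ 2)))
          nlinarith [this, Real.exp_nonneg (-(a / 2 * ‖u‖ ^ 2))]
      _ = (1 + n ! / (a / 2) ^ n) * Real.exp (-(a / 2 * ‖u‖ ^ 2)) := by ring
  exact Integrable.mono' (hexp.const_mul _)
    (Continuous.aestronglyMeasurable (by fun_prop))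
    (Filter.Eventually.of_forall hbound)

set_option maxHeartbeats 1000000 in
theorem stmt_15 (N : ℕ) (hN : 1 ≤ N) (k ℓ : ℕ) (c C₀ : ℝ) (hc : 0 < c) (hC₀ : 0 < C₀)
    (F : EuclideanSpace ℝ (Fin N) → ℝ → ℝ)
    (hFnonneg : ∀ ξ t, 0 ≤ t → 0 ≤ F ξ t)
    (hF : ∀ ξ t, 0 ≤ t →
      F ξ t ≤ C₀ * Real.exp (-c * (‖ξ‖ ^ 2 / (1 + ‖ξ‖ ^ 2 + ‖ξ‖ ^ 4)) * t) * F ξ 0)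
    (hbdd : BddAbove ((fun ξ => F ξ 0) '' Metric.closedBall 0 1))
    (hint : Integrable (fun ξ => ‖ξ‖ ^ (2 * (k + ℓ)) * F ξ 0))
    (hintt : ∀ t, 0 ≤ t → Integrable (fun ξ => ‖ξ‖ ^ (2 * k) * F ξ t)) :
    ∃ C > (0 : ℝ), ∀ t : ℝ, 0 ≤ t →
      ∫ ξ, ‖ξ‖ ^ (2 * k) * F ξ t
        ≤ C * (1 + t) ^ (-(N : ℝ) / 2 - k) *
            sSup ((fun ξ => F ξ 0) '' Metric.closedBall 0 1)
          + C * (1 + t) ^ (-(ℓ : ℝ)) *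
            ∫ ξ in {ξ : EuclideanSpace ℝ (Fin N) | 1 ≤ ‖ξ‖},
              ‖ξ‖ ^ (2 * (k + ℓ)) * F ξ 0 := by
  classical
  set b : ℝ := c / 3 with hbdef
  have hb : 0 < b := by rw [hbdef]; positivity
  have hcb : c = 3 * b := by rw [hbdef]; ring
  set M := sSup ((fun ξ => F ξ 0) '' Metric.closedBall 0 1) with hMdef
  have hM0 : 0 ≤ M :=
    le_trans (hFnonneg 0 0 le_rfl)
      (le_csSup hbdd ⟨0, by simp, rfl⟩)
  set I := ∫ u : EuclideanSpace ℝ (Fin N), ‖u‖ ^ (2 * k) * Real.exp (-(b * ‖u‖ ^ 2)) with hIdef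
  have hI0 : 0 ≤ I := integral_nonneg fun u => by positivity
  set K₁ : ℝ := C₀ * Real.exp b * I with hK₁def
  set K₂ : ℝ := C₀ * Real.exp b * (ℓ ! / b ^ ℓ) with hK₂def
  have hK₁0 : 0 ≤ K₁ := mul_nonneg (by positivity) hI0
  have hK₂0 : 0 < K₂ := by rw [hK₂def]; positivity
  refine ⟨K₁ + K₂ + 1, by linarith, fun t ht => ?_⟩
  have h1t : (0:ℝ) < 1 + t := by linarith
  set S : Set (EuclideanSpace ℝ (Fin N)) := {ξ | 1 ≤ ‖ξ‖} with hSdef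
  have hSmeas : MeasurableSet S := (isClosed_le continuous_const continuous_norm).measurableSet
  have hsplit := integral_add_compl hSmeas (hintt t ht)
  set J := ∫ ξ in S, ‖ξ‖ ^ (2 * (k + ℓ)) * F ξ 0 with hJdef
  have hJ0 : 0 ≤ J := setIntegral_nonneg hSmeas fun ξ _ =>
    mul_nonneg (by positivity) (hFnonneg ξ 0 le_rfl)
  -- low frequency part
  have hlow : ∫ ξ in Sᶜ, ‖ξ‖ ^ (2 * k) * F ξ t
      ≤ K₁ * (1 + t) ^ (-(N : ℝ) / 2 - (k : ℝ)) * M := by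
    have key : ∀ ξ : EuclideanSpace ℝ (Fin N), ξ ∈ Sᶜ →
        ‖ξ‖ ^ (2 * k) * F ξ t
          ≤ (C₀ * Real.exp b * M) * (‖ξ‖ ^ (2 * k) * Real.exp (-(b * (1 + t) * ‖ξ‖ ^ 2))) := by
      intro ξ hξ
      have hr1 : ‖ξ‖ < 1 := by simpa [hSdef] using hξ
      have hr0 : (0:ℝ) ≤ ‖ξ‖ := norm_nonneg ξ
      have hr2 : ‖ξ‖ ^ 2 ≤ 1 := by nlinarith
      have hF0M : F ξ 0 ≤ M :=
        le_csSup hbdd ⟨ξ, by simpa [Metric.mem_closedBall, dist_zero_right] using hr1.le, rfl⟩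
      have hexp : Real.exp (-c * (‖ξ‖ ^ 2 / (1 + ‖ξ‖ ^ 2 + ‖ξ‖ ^ 4)) * t)
          ≤ Real.exp b * Real.exp (-(b * (1 + t) * ‖ξ‖ ^ 2)) := by
        rw [← Real.exp_add]
        apply Real.exp_le_exp.2
        have hden : (0:ℝ) < 1 + ‖ξ‖ ^ 2 + ‖ξ‖ ^ 4 := by positivity
        have hden3 : 1 + ‖ξ‖ ^ 2 + ‖ξ‖ ^ 4 ≤ 3 := by nlinarith
        have hbs : b * ‖ξ‖ ^ 2 ≤ c * ‖ξ‖ ^ 2 / (1 + ‖ξ‖ ^ 2 + ‖ξ‖ ^ 4) := by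
          rw [le_div_iff₀ hden]
          nlinarith [mul_le_mul_of_nonneg_left hden3 (mul_nonneg hb.le (sq_nonneg ‖ξ‖))]
        have hbs' : c * (‖ξ‖ ^ 2 / (1 + ‖ξ‖ ^ 2 + ‖ξ‖ ^ 4)) = c * ‖ξ‖ ^ 2 / (1 + ‖ξ‖ ^ 2 + ‖ξ‖ ^ 4) := by
          ring
        nlinarith [mul_le_mul_of_nonneg_right hbs ht, mul_nonneg hb.le (sq_nonneg ‖ξ‖), hr2]
      calc ‖ξ‖ ^ (2 * k) * F ξ t
          ≤ ‖ξ‖ ^ (2 * k) * (C₀ * Real.exp (-c * (‖ξ‖ ^ 2 / (1 + ‖ξ‖ ^ 2 + ‖ξ‖ ^ 4)) * t) * F ξ 0) :=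
            mul_le_mul_of_nonneg_left (hF ξ t ht) (by positivity)
        _ ≤ ‖ξ‖ ^ (2 * k) * (C₀ * (Real.exp b * Real.exp (-(b * (1 + t) * ‖ξ‖ ^ 2))) * M) := by
            apply mul_le_mul_of_nonneg_left _ (by positivity)
            exact mul_le_mul (mul_le_mul_of_nonneg_left hexp hC₀.le) hF0M
              (hFnonneg ξ 0 le_rfl) (by positivity)
        _ = (C₀ * Real.exp b * M) * (‖ξ‖ ^ (2 * k) * Real.exp (-(b * (1 + t) * ‖ξ‖ ^ 2))) := by
            ring
    have hg : Integrable (fun ξ : EuclideanSpace ℝ (Fin N) =>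
        ‖ξ‖ ^ (2 * k) * Real.exp (-(b * (1 + t) * ‖ξ‖ ^ 2))) :=
      aux_gauss_integrable N (2 * k) (by positivity)
    have step1 : ∫ ξ in Sᶜ, ‖ξ‖ ^ (2 * k) * F ξ t
        ≤ ∫ ξ in Sᶜ, (C₀ * Real.exp b * M) * (‖ξ‖ ^ (2 * k) * Real.exp (-(b * (1 + t) * ‖ξ‖ ^ 2))) :=
      setIntegral_mono_on ((hintt t ht).integrableOn) ((hg.const_mul _).integrableOn)
        hSmeas.compl key
    have step2 : ∫ ξ in Sᶜ, (C₀ * Real.exp b * M) * (‖ξ‖ ^ (2 * k) * Real.exp (-(b * (1 + t) * ‖ξ‖ ^ 2)))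
        ≤ (C₀ * Real.exp b * M) * ∫ ξ : EuclideanSpace ℝ (Fin N),
            ‖ξ‖ ^ (2 * k) * Real.exp (-(b * (1 + t) * ‖ξ‖ ^ 2)) := by
      rw [integral_const_mul]
      exact mul_le_mul_of_nonneg_left
        (setIntegral_le_integral hg (Filter.Eventually.of_forall fun ξ => by positivity))
        (by positivity)
    -- change of variables
    have hcv : ∫ ξ : EuclideanSpace ℝ (Fin N), ‖ξ‖ ^ (2 * k) * Real.exp (-(b * (1 + t) * ‖ξ‖ ^ 2))
        = (1 + t) ^ (-(N : ℝ) / 2 - (k : ℝ)) * I := by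
      set R := Real.sqrt (1 + t) with hRdef
      have hR0 : (0:ℝ) ≤ R := Real.sqrt_nonneg _
      have hRpos : (0:ℝ) < R := Real.sqrt_pos.2 h1t
      have hRsq : R ^ 2 = 1 + t := Real.sq_sqrt h1t.le
      have hfeq : ∀ x : EuclideanSpace ℝ (Fin N),
          ‖R • x‖ ^ (2 * k) * Real.exp (-(b * ‖R • x‖ ^ 2))
            = (1 + t) ^ k * (‖x‖ ^ (2 * k) * Real.exp (-(b * (1 + t) * ‖x‖ ^ 2))) := by
        intro x
        rw [norm_smul, Real.norm_eq_abs, abs_of_nonneg hR0]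
        have h1 : (R * ‖x‖) ^ (2 * k) = (1 + t) ^ k * ‖x‖ ^ (2 * k) := by
          rw [mul_pow, pow_mul R, hRsq]
        have h2 : b * (R * ‖x‖) ^ 2 = b * (1 + t) * ‖x‖ ^ 2 := by
          rw [mul_pow, hRsq]; ring
        rw [h1, h2]; ring
      have hcomp := MeasureTheory.Measure.integral_comp_smul_of_nonneg
        (μ := (volume : Measure (EuclideanSpace ℝ (Fin N))))
        (f := fun u : EuclideanSpace ℝ (Fin N) => ‖u‖ ^ (2 * k) * Real.exp (-(b * ‖u‖ ^ 2)))
        R (hR := hR0)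
      rw [finrank_euclideanSpace_fin] at hcomp
      simp only [hfeq] at hcomp
      rw [integral_const_mul, smul_eq_mul] at hcomp
      have hItot : ∫ ξ : EuclideanSpace ℝ (Fin N), ‖ξ‖ ^ (2 * k) * Real.exp (-(b * (1 + t) * ‖ξ‖ ^ 2))
          = ((1 + t) ^ k)⁻¹ * ((R ^ N)⁻¹ * I) := by
        rw [← hIdef] at hcomp
        field_simp at hcomp ⊢
        linarith [hcomp]
      rw [hItot]
      have hpow : ((1 + t) ^ k)⁻¹ * (R ^ N)⁻¹ = (1 + t) ^ (-(N : ℝ) / 2 - (k : ℝ)) := by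
        have h1 : R ^ N = (1 + t) ^ ((N : ℝ) / 2) := by
          rw [hRdef, Real.sqrt_eq_rpow, ← Real.rpow_natCast ((1 + t) ^ ((1:ℝ) / 2)) N,
            ← Real.rpow_mul h1t.le]
          congr 1; ring
        have h2 : (1 + t) ^ k = (1 + t) ^ ((k : ℝ)) := (Real.rpow_natCast _ k).symm
        rw [h1, h2, ← Real.rpow_neg h1t.le, ← Real.rpow_neg h1t.le, ← Real.rpow_add h1t]
        congr 1
        ring
      rw [← hpow]; ring
    calc ∫ ξ in Sᶜ, ‖ξ‖ ^ (2 * k) * F ξ t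
        ≤ (C₀ * Real.exp b * M) * ∫ ξ : EuclideanSpace ℝ (Fin N),
            ‖ξ‖ ^ (2 * k) * Real.exp (-(b * (1 + t) * ‖ξ‖ ^ 2)) := step1.trans step2
      _ = K₁ * (1 + t) ^ (-(N : ℝ) / 2 - (k : ℝ)) * M := by rw [hcv, hK₁def]; ring
  -- high frequency part
  have hhigh : ∫ ξ in S, ‖ξ‖ ^ (2 * k) * F ξ t
      ≤ K₂ * (1 + t) ^ (-(ℓ : ℝ)) * J := by
    have hrp : (1 + t) ^ (-(ℓ : ℝ)) = ((1 + t) ^ ℓ)⁻¹ := by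
      rw [Real.rpow_neg h1t.le, Real.rpow_natCast]
    have key : ∀ ξ : EuclideanSpace ℝ (Fin N), ξ ∈ S →
        ‖ξ‖ ^ (2 * k) * F ξ t
          ≤ (K₂ * ((1 + t) ^ ℓ)⁻¹) * (‖ξ‖ ^ (2 * (k + ℓ)) * F ξ 0) := by
      intro ξ hξ
      have hr1 : (1:ℝ) ≤ ‖ξ‖ := hξ
      have hrpos : (0:ℝ) < ‖ξ‖ := lt_of_lt_of_le one_pos hr1
      have hr2 : (1:ℝ) ≤ ‖ξ‖ ^ 2 := by nlinarith
      have hs0 : (0:ℝ) ≤ (‖ξ‖ ^ 2)⁻¹ := by positivity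
      have hs1 : (‖ξ‖ ^ 2)⁻¹ ≤ 1 := by
        rw [inv_le_one_iff₀]; right; exact hr2
      have hF0 : 0 ≤ F ξ 0 := hFnonneg ξ 0 le_rfl
      have hexpA : Real.exp (-c * (‖ξ‖ ^ 2 / (1 + ‖ξ‖ ^ 2 + ‖ξ‖ ^ 4)) * t)
          ≤ Real.exp b * Real.exp (-(b * (1 + t) * (‖ξ‖ ^ 2)⁻¹)) := by
        rw [← Real.exp_add]
        apply Real.exp_le_exp.2
        have hden : (0:ℝ) < 1 + ‖ξ‖ ^ 2 + ‖ξ‖ ^ 4 := by positivity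
        have hD3 : 1 + ‖ξ‖ ^ 2 + ‖ξ‖ ^ 4 ≤ 3 * ‖ξ‖ ^ 4 := by nlinarith
        have hbs : b / ‖ξ‖ ^ 2 ≤ c * ‖ξ‖ ^ 2 / (1 + ‖ξ‖ ^ 2 + ‖ξ‖ ^ 4) := by
          rw [div_le_div_iff₀ (by positivity) hden]
          nlinarith [mul_le_mul_of_nonneg_left hD3 hb.le]
        have hbs2 : b * (‖ξ‖ ^ 2)⁻¹ ≤ c * (‖ξ‖ ^ 2 / (1 + ‖ξ‖ ^ 2 + ‖ξ‖ ^ 4)) := by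
          calc b * (‖ξ‖ ^ 2)⁻¹ = b / ‖ξ‖ ^ 2 := by ring
            _ ≤ c * ‖ξ‖ ^ 2 / (1 + ‖ξ‖ ^ 2 + ‖ξ‖ ^ 4) := hbs
            _ = c * (‖ξ‖ ^ 2 / (1 + ‖ξ‖ ^ 2 + ‖ξ‖ ^ 4)) := by ring
        nlinarith [mul_le_mul_of_nonneg_right hbs2 ht, mul_le_mul_of_nonneg_left hs1 hb.le]
      have haux := aux_pow_mul_exp_le ℓ (a := b * (1 + t)) (s := (‖ξ‖ ^ 2)⁻¹)
        (by positivity) hs0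
      calc ‖ξ‖ ^ (2 * k) * F ξ t
          ≤ ‖ξ‖ ^ (2 * k) * (C₀ * Real.exp (-c * (‖ξ‖ ^ 2 / (1 + ‖ξ‖ ^ 2 + ‖ξ‖ ^ 4)) * t) * F ξ 0) :=
            mul_le_mul_of_nonneg_left (hF ξ t ht) (by positivity)
        _ ≤ ‖ξ‖ ^ (2 * k) * (C₀ * (Real.exp b * Real.exp (-(b * (1 + t) * (‖ξ‖ ^ 2)⁻¹))) * F ξ 0) := by
            apply mul_le_mul_of_nonneg_left _ (by positivity)
            exact mul_le_mul_of_nonneg_right (mul_le_mul_of_nonneg_left hexpA hC₀.le) hF0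
        _ = (C₀ * Real.exp b * F ξ 0 * ‖ξ‖ ^ (2 * (k + ℓ)))
            * (((‖ξ‖ ^ 2)⁻¹) ^ ℓ * Real.exp (-(b * (1 + t) * (‖ξ‖ ^ 2)⁻¹))) := by
            field_simp
            have hx : ‖ξ‖⁻¹ ^ (ℓ * 2) * ‖ξ‖ ^ (ℓ * 2) = 1 := by
              rw [← mul_pow, inv_mul_cancel₀ hrpos.ne', one_pow]
            linear_combination (-(‖ξ‖ ^ (k * 2) * F ξ 0)) * hx
        _ ≤ (C₀ * Real.exp b * F ξ 0 * ‖ξ‖ ^ (2 * (k + ℓ))) * (ℓ ! / (b * (1 + t)) ^ ℓ) :=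
            mul_le_mul_of_nonneg_left haux (by positivity)
        _ = (K₂ * ((1 + t) ^ ℓ)⁻¹) * (‖ξ‖ ^ (2 * (k + ℓ)) * F ξ 0) := by
            rw [hK₂def, mul_pow]
            field_simp
    have hmono := setIntegral_mono_on ((hintt t ht).integrableOn)
      ((hint.const_mul (K₂ * ((1 + t) ^ ℓ)⁻¹)).integrableOn) hSmeas key
    rw [integral_const_mul, ← hJdef] at hmono
    calc ∫ ξ in S, ‖ξ‖ ^ (2 * k) * F ξ t ≤ K₂ * ((1 + t) ^ ℓ)⁻¹ * J := hmono
      _ = K₂ * (1 + t) ^ (-(ℓ : ℝ)) * J := by rw [hrp]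
  -- combine
  have hp1 : (0:ℝ) ≤ (1 + t) ^ (-(N : ℝ) / 2 - (k : ℝ)) := Real.rpow_nonneg h1t.le _
  have hp2 : (0:ℝ) ≤ (1 + t) ^ (-(ℓ : ℝ)) := Real.rpow_nonneg h1t.le _
  have hfinal : ∫ ξ, ‖ξ‖ ^ (2 * k) * F ξ t
      ≤ K₁ * (1 + t) ^ (-(N : ℝ) / 2 - (k : ℝ)) * M + K₂ * (1 + t) ^ (-(ℓ : ℝ)) * J := by
    rw [← hsplit]
    linarith [hhigh, hlow]
  refine hfinal.trans ?_
  have e1 : K₁ * (1 + t) ^ (-(N : ℝ) / 2 - (k : ℝ)) * M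
      ≤ (K₁ + K₂ + 1) * (1 + t) ^ (-(N : ℝ) / 2 - (k : ℝ)) * M := by
    apply mul_le_mul_of_nonneg_right _ hM0
    apply mul_le_mul_of_nonneg_right _ hp1
    linarith
  have e2 : K₂ * (1 + t) ^ (-(ℓ : ℝ)) * J ≤ (K₁ + K₂ + 1) * (1 + t) ^ (-(ℓ : ℝ)) * J := by
    apply mul_le_mul_of_nonneg_right _ hJ0
    apply mul_le_mul_of_nonneg_right _ hp2
    linarith
  exact add_le_add e1 e2
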